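/- Let S be a subring of a commutative ring R and I an ideal of S. For a scalar polynomial f ∈ R[x], 1 ≤ i ≤ j ≤ n, and m ≥ 0: the set of values {[f(C)]_{i j} : C ∈ T_n(S)} equals the set of values {[f(C)]_{i+m, j+m} : C ∈ T_{n+m}(S)}, i.e., the image of the (i,j)-entry of f evaluated on upper triangular matrices with entries in S depends only on f and j − i. -/
import Mathlib

section Aux

variable {n m : ℕ} {R : Type*} [CommRing R]

private def corner (D : Matrix (Fin (n+m)) (Fin (n+m)) R) : Matrix (Fin n) (Fin n) R :=
  Matrix.of fun a b : Fin n => D ⟨a+m, by omega⟩ ⟨b+m, by omega⟩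

private lemma sum_corner (g : Fin (n+m) → R) (h0 : ∀ c : Fin (n+m), (c:ℕ) < m → g c = 0) :
    ∑ c : Fin (n+m), g c = ∑ c : Fin n, g ⟨c+m, by omega⟩ := by
  rw [← Finset.sum_subset (Finset.subset_univ
      (Finset.univ.filter fun c : Fin (n+m) => m ≤ (c:ℕ)))]
  · symm
    refine Finset.sum_bij (fun (c : Fin n) _ => (⟨(c:ℕ)+m, by omega⟩ : Fin (n+m)))
      ?_ ?_ ?_ ?_
    · intro c _; simp
    · intro c _ c' _ h
      ext
      have := congrArg Fin.val h
      simpa using this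
    · intro c hc
      simp only [Finset.mem_filter, Finset.mem_univ, true_and] at hc
      exact ⟨⟨(c:ℕ) - m, by omega⟩, Finset.mem_univ _, by ext; simp; omega⟩
    · intro c _; rfl
  · intro x _ hx
    simp only [Finset.mem_filter, Finset.mem_univ, true_and, not_le] at hx
    exact h0 x hx

private lemma bt_pow (D : Matrix (Fin (n+m)) (Fin (n+m)) R)
    (hD : D.BlockTriangular id) (k : ℕ) : (D ^ k).BlockTriangular id := by
  induction k with
  | zero => simpa using Matrix.blockTriangular_one
  | succ k ih => rw [pow_succ]; exact ih.mul hD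

private lemma corner_pow (D : Matrix (Fin (n+m)) (Fin (n+m)) R)
    (hD : D.BlockTriangular id) (k : ℕ) (a b : Fin n) :
    ((corner D) ^ k) a b = (D ^ k) ⟨a+m, by omega⟩ ⟨b+m, by omega⟩ := by
  induction k generalizing a b with
  | zero =>
    simp only [pow_zero, Matrix.one_apply]
    have : (⟨a+m, by omega⟩ : Fin (n+m)) = ⟨b+m, by omega⟩ ↔ a = b := by
      rw [Fin.mk.injEq, Fin.ext_iff]; omega
    simp [this]
  | succ k ih =>
    rw [pow_succ, pow_succ, Matrix.mul_apply, Matrix.mul_apply]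
    rw [sum_corner (fun c => (D ^ k) ⟨a+m, by omega⟩ c * D c ⟨b+m, by omega⟩)]
    · exact Finset.sum_congr rfl fun c _ => by rw [ih]; rfl
    · intro c hc
      have h1 : (D ^ k) ⟨a+m, by omega⟩ c = 0 := by
        refine bt_pow D hD k ?_
        simp only [id_eq, Fin.lt_def, Fin.val_mk]
        omega
      simp [h1]

private lemma corner_aeval (D : Matrix (Fin (n+m)) (Fin (n+m)) R)
    (hD : D.BlockTriangular id) (f : Polynomial R) (a b : Fin n) :
    (Polynomial.aeval (corner D) f) a b
      = (Polynomial.aeval D f) ⟨a+m, by omega⟩ ⟨b+m, by omega⟩ := by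
  rw [Polynomial.aeval_eq_sum_range, Polynomial.aeval_eq_sum_range]
  rw [Matrix.sum_apply, Matrix.sum_apply]
  refine Finset.sum_congr rfl fun k _ => ?_
  rw [Matrix.smul_apply, Matrix.smul_apply, corner_pow D hD]

end Aux

/-- For a scalar polynomial `f ∈ R[x]`, `i ≤ j` in `Fin n`, and `m ≥ 0`, the set of
values of the `(i,j)`-entry of `f(C)` as `C` ranges over `Tₙ(S)` equals the set of
values of the `(i+m, j+m)`-entry of `f(C)` as `C` ranges over `T_{n+m}(S)`. -/
theorem stmt9 (n m : ℕ) (R : Type*) [CommRing R] (S : Subring R) (f : Polynomial R)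
    (i j : Fin n) (hij : i ≤ j) :
    {r : R | ∃ C : Matrix (Fin n) (Fin n) R, C.BlockTriangular id ∧
        (∀ a b, C a b ∈ S) ∧ (Polynomial.aeval C f) i j = r}
    = {r : R | ∃ C : Matrix (Fin (n + m)) (Fin (n + m)) R, C.BlockTriangular id ∧
        (∀ a b, C a b ∈ S) ∧
        (Polynomial.aeval C f) ⟨i + m, by omega⟩ ⟨j + m, by omega⟩ = r} := by
  ext r
  constructor
  · rintro ⟨C, hC, hS, rfl⟩
    set D : Matrix (Fin (n+m)) (Fin (n+m)) R := Matrix.of fun a b : Fin (n+m) =>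
      if h : m ≤ (a:ℕ) ∧ m ≤ (b:ℕ) then C ⟨a-m, by omega⟩ ⟨b-m, by omega⟩ else 0 with hDdef
    have hD : D.BlockTriangular id := by
      intro a b hab
      simp only [id_eq, Fin.lt_def] at hab
      simp only [hDdef, Matrix.of_apply]
      split
      · next h =>
        refine hC ?_
        simp only [id_eq, Fin.lt_def, Fin.val_mk]
        omega
      · rfl
    refine ⟨D, hD, ?_, ?_⟩
    · intro a b
      simp only [hDdef, Matrix.of_apply]
      split
      · exact hS _ _
      · exact zero_mem _
    · rw [← corner_aeval D hD f i j]
      have hc : corner D = C := by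
        ext a b
        simp only [corner, Matrix.of_apply, hDdef]
        rw [dif_pos ⟨by simp, by simp⟩]
        apply congrArg₂ C <;> exact Fin.ext (by simp)
      rw [hc]
  · rintro ⟨D, hD, hS, rfl⟩
    refine ⟨corner D, ?_, fun a b => hS _ _, (corner_aeval D hD f i j)⟩
    intro a b hab
    simp only [id_eq, Fin.lt_def] at hab
    refine hD ?_
    simp only [id_eq, Fin.lt_def, Fin.val_mk]
    omega
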